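/- arXiv:2212.00123 — 3 statements merged into one kernel-verified Lean document; each statement's English description precedes it below -/
import Mathlib

section
/- Let n ≥ 2, k ≥ 2, and fix any orientation section σ. Then for every cyclic word W one has p←_k(π_k(W)) = π_{k−1}(W) and p→_k(π_k(W)) = π_{k−1}(W). In particular there is a ℤ-linear map p_k : M_k → M_{k−1} with p_k ∘ π_k = π_{k−1}. -/
open List

/-- A letter of the free group `F_n`: a generator index together with a sign. -/
abbrev Letter (n : ℕ) := Fin n × Bool

/-- The inverse of a letter. -/
def linv {n : ℕ} (a : Letter n) : Letter n := (a.1, !a.2)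

@[simp] lemma linv_linv {n : ℕ} (a : Letter n) : linv (linv a) = a := by
  cases a with
  | mk x b => simp [linv]

/-- The (formal) inverse of a word. -/
def wInv {n : ℕ} (w : List (Letter n)) : List (Letter n) := (w.map linv).reverse

@[simp] lemma wInv_wInv {n : ℕ} (w : List (Letter n)) : wInv (wInv w) = w := by
  simp [wInv, Function.comp_def]

/-- A word is reduced if no two consecutive letters are mutually inverse. -/
def Reduced {n : ℕ} (w : List (Letter n)) : Prop :=
  List.Chain' (fun a b => b ≠ linv a) w

/-- A word is cyclically reduced if it is reduced and its first and last letters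
are not mutually inverse. -/
def CyclicallyReduced {n : ℕ} (w : List (Letter n)) : Prop :=
  Reduced w ∧ ∀ a b, w.head? = some a → w.getLast? = some b → a ≠ linv b

/-- `lpow l m` is the `m`-fold concatenation of the list `l` with itself. -/
def lpow {α : Type*} (l : List α) : ℕ → List α
  | 0 => []
  | m + 1 => l ++ lpow l m

/-- The number of oriented occurrences of `u` in the cyclic word represented by `w`. -/
def orientedOcc {n : ℕ} (u w : List (Letter n)) : ℕ :=
  ((Finset.range w.length).filter (fun i => u <+: lpow (w.rotate i) (u.length + 1))).card

/-- `occ u w` : occurrences of the unoriented word `{u, u⁻¹}` in the cyclic word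
represented by `w`. -/
def occ {n : ℕ} (u w : List (Letter n)) : ℕ :=
  orientedOcc u w + orientedOcc (wInv u) w

lemma occ_wInv {n : ℕ} (u w : List (Letter n)) : occ (wInv u) w = occ u w := by
  simp [occ, wInv_wInv, Nat.add_comm]

/-- Occurrences of `u` as a contiguous factor of `w`. -/
def factOcc {n : ℕ} (u w : List (Letter n)) : ℕ :=
  ((Finset.range (w.length + 1)).filter (fun i => u <+: w.drop i)).card

/-- `occf u w` : occurrences of `{u, u⁻¹}` as a contiguous factor of `w`. -/
def occf {n : ℕ} (u w : List (Letter n)) : ℕ := factOcc u w + factOcc (wInv u) w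

/-- Two cyclically reduced words represent the same cyclic word iff one is a
rotation of the other or of its inverse. -/
def SameCyclicWord {n : ℕ} (v w : List (Letter n)) : Prop :=
  (∃ i, w = v.rotate i) ∨ (∃ i, w = (wInv v).rotate i)

/-- Cyclic reduction: repeatedly delete the first and last letter while they are
mutually inverse. -/
def cyclicReduce {n : ℕ} : List (Letter n) → List (Letter n)
  | [] => []
  | a :: rest =>
    if rest.getLast? = some (linv a) then cyclicReduce rest.dropLast
    else a :: rest
  termination_by w => w.length
  decreasing_by simp [List.length_dropLast]

/-- Oriented reduced words of length `k`. -/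
structure RW (n k : ℕ) where
  val : List (Letter n)
  red : Reduced val
  len : val.length = k

instance (n k : ℕ) : DecidableEq (RW n k) := fun a b =>
  decidable_of_iff (a.val = b.val)
    ⟨fun h => by cases a; cases b; cases h; rfl, fun h => congrArg RW.val h⟩

/-- Identify a reduced word with its inverse: the quotient is the set `W_k` of
unoriented words of length `k`. -/
instance uwSetoid (n k : ℕ) : Setoid (RW n k) where
  r u v := v.val = u.val ∨ v.val = wInv u.val
  iseqv := by
    refine ⟨fun u => Or.inl rfl, ?_, ?_⟩
    · rintro u v (h | h)
      · exact Or.inl h.symm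
      · exact Or.inr (by rw [h, wInv_wInv])
    · rintro u v w (h1 | h1) (h2 | h2)
      · exact Or.inl (h2.trans h1)
      · exact Or.inr (h2.trans (congrArg wInv h1))
      · exact Or.inr (h2.trans h1)
      · exact Or.inl (by rw [h2, h1, wInv_wInv])

instance (n k : ℕ) : ∀ a b : RW n k, Decidable (a ≈ b) := fun a b =>
  show Decidable (b.val = a.val ∨ b.val = wInv a.val) from inferInstance

/-- `W_k` : unoriented reduced words of length `k`. -/
abbrev UW (n k : ℕ) := Quotient (uwSetoid n k)

def toVec (n k : ℕ) (u : RW n k) : List.Vector (Letter n) k := ⟨u.val, u.len⟩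

lemma toVec_inj (n k : ℕ) : Function.Injective (toVec n k) := by
  intro a b h
  have h' : a.val = b.val := congrArg Subtype.val h
  cases a; cases b; cases h'; rfl

noncomputable instance (n k : ℕ) : Fintype (RW n k) :=
  Fintype.ofInjective _ (toVec_inj n k)

noncomputable example (n k : ℕ) : Fintype (UW n k) := inferInstance
noncomputable example (n k : ℕ) : DecidableEq (UW n k) := inferInstance

/-- `M_k` : the free ℤ-module on `W_k`, realized as functions `W_k → ℤ`. -/
abbrev Mk (n k : ℕ) := UW n k → ℤ

/-- `π_k` of the cyclic word represented by `w` : the vector of occurrence counts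
of unoriented words of length `k`. -/
def pik (n k : ℕ) (w : List (Letter n)) : Mk n k :=
  Quotient.lift (fun u : RW n k => (occ u.val w : ℤ)) (by
    intro a b hab
    have h : occ a.val w = occ b.val w := by
      rcases hab with h | h
      · rw [h]
      · rw [h, occ_wInv]
    show ((occ a.val w : ℕ) : ℤ) = ((occ b.val w : ℕ) : ℤ)
    rw [h])

lemma Reduced.drop' {n : ℕ} {w : List (Letter n)} (h : Reduced w) (m : ℕ) :
    Reduced (w.drop m) :=
  List.IsChain.suffix h (List.drop_suffix m w)

lemma Reduced.dropLast' {n : ℕ} {w : List (Letter n)} (h : Reduced w) :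
    Reduced w.dropLast :=
  List.IsChain.prefix h (List.dropLast_prefix w)

/-- The unoriented `(k-1)`-suffix of an oriented word of length `k`. -/
def sufC {n k : ℕ} (w : RW n k) : UW n (k - 1) :=
  Quotient.mk (uwSetoid n (k - 1)) ⟨w.val.drop 1, w.red.drop' 1, by simp [w.len]⟩

/-- The unoriented `(k-1)`-prefix of an oriented word of length `k`. -/
def preC {n k : ℕ} (w : RW n k) : UW n (k - 1) :=
  Quotient.mk (uwSetoid n (k - 1)) ⟨w.val.dropLast, w.red.dropLast', by simp [w.len]⟩

/-- Matrix of `p←_k` w.r.t. the orientation section `σ`: a basis element `w̄` of `M_k`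
is sent to the sum of the unoriented `(k-1)`-words at its outward-pointing ends. -/
noncomputable def AOut (n k : ℕ) (σ : List (Letter n) → List (Letter n)) :
    Matrix (UW n (k - 1)) (UW n k) ℤ := fun ub wb =>
  ∑ w : RW n k,
    if Quotient.mk (uwSetoid n k) w = wb ∧ σ w.val = w.val then
      ((if sufC w = ub ∧ σ (w.val.drop 1) = w.val.drop 1 then 1 else 0) +
       (if preC w = ub ∧ σ (w.val.dropLast) = wInv (w.val.dropLast) then 1 else 0))
    else 0

/-- Matrix of `p→_k` : inward-pointing ends. -/
noncomputable def AIn (n k : ℕ) (σ : List (Letter n) → List (Letter n)) :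
    Matrix (UW n (k - 1)) (UW n k) ℤ := fun ub wb =>
  ∑ w : RW n k,
    if Quotient.mk (uwSetoid n k) w = wb ∧ σ w.val = w.val then
      ((if sufC w = ub ∧ σ (w.val.drop 1) = wInv (w.val.drop 1) then 1 else 0) +
       (if preC w = ub ∧ σ (w.val.dropLast) = w.val.dropLast then 1 else 0))
    else 0

/-- `p←_k : M_k → M_{k-1}`. -/
noncomputable def pOut (n k : ℕ) (σ : List (Letter n) → List (Letter n)) :
    Mk n k →ₗ[ℤ] Mk n (k - 1) := (AOut n k σ).mulVecLin

/-- `p→_k : M_k → M_{k-1}`. -/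
noncomputable def pIn (n k : ℕ) (σ : List (Letter n) → List (Letter n)) :
    Mk n k →ₗ[ℤ] Mk n (k - 1) := (AIn n k σ).mulVecLin



@[simp] lemma lpow_length {α : Type*} (l : List α) (m : ℕ) :
    (lpow l m).length = m * l.length := by
  induction m with
  | zero => simp [lpow]
  | succ m ih => simp [lpow, ih, Nat.succ_mul, Nat.add_comm]

lemma lpow_add {α : Type*} (l : List α) (m m' : ℕ) :
    lpow l (m + m') = lpow l m ++ lpow l m' := by
  induction m with
  | zero => simp [lpow]
  | succ m ih => simp [lpow, ih, Nat.succ_add, List.append_assoc]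

lemma lpow_prefix_lpow {α : Type*} (l : List α) {m m' : ℕ} (h : m ≤ m') :
    lpow l m <+: lpow l m' := by
  obtain ⟨d, rfl⟩ := Nat.exists_eq_add_of_le h
  rw [lpow_add]; exact ⟨_, rfl⟩

lemma prefix_lpow_congr {α : Type*} {l u : List α} {m1 m2 : ℕ}
    (h1 : u.length ≤ m1 * l.length) (h2 : u.length ≤ m2 * l.length) :
    u <+: lpow l m1 ↔ u <+: lpow l m2 := by
  rcases Nat.le_total m1 m2 with h | h
  · constructor
    · exact fun hp => hp.trans (lpow_prefix_lpow l h)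
    · intro hp
      exact List.prefix_of_prefix_length_le hp (lpow_prefix_lpow l h) (by simpa using h1)
  · constructor
    · intro hp
      exact List.prefix_of_prefix_length_le hp (lpow_prefix_lpow l h) (by simpa using h2)
    · exact fun hp => hp.trans (lpow_prefix_lpow l h)

lemma lpow_getElem {α : Type*} (l : List α) (m j : ℕ) (hj : j < (lpow l m).length)
    (hl : 0 < l.length) :
    (lpow l m)[j] = l[j % l.length]'(Nat.mod_lt _ hl) := by
  induction m generalizing j with
  | zero => simp [lpow] at hj
  | succ m ih =>
    rw [lpow_length] at hj
    have he : lpow l (m+1) = l ++ lpow l m := rfl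
    by_cases h : j < l.length
    · simp only [he, List.getElem_append_left h]
      congr 1
      exact (Nat.mod_eq_of_lt h).symm
    · push_neg at h
      have hj' : j - l.length < (lpow l m).length := by
        rw [lpow_length]; rw [Nat.succ_mul] at hj; omega
      simp only [he, List.getElem_append_right h]
      rw [ih _ hj']
      congr 1
      conv_rhs => rw [show j = (j - l.length) + l.length by omega]
      rw [Nat.add_mod_right]
@[simp] lemma wInv_length {n : ℕ} (w : List (Letter n)) : (wInv w).length = w.length := by
  simp [wInv]

lemma wInv_injective {n : ℕ} : Function.Injective (wInv (n := n)) := by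
  intro a b h
  have := congrArg wInv h
  simpa using this

lemma wInv_getElem {n : ℕ} (w : List (Letter n)) (j : ℕ) (hj : j < w.length) :
    (wInv w)[j]'(by simpa using hj) = linv (w[w.length - 1 - j]'(by omega)) := by
  simp only [wInv]
  rw [List.getElem_reverse]
  simp [List.getElem_map]

lemma linv_ne_self {n : ℕ} (a : Letter n) : linv a ≠ a := by
  cases a with
  | mk x b => simp [linv]

lemma Reduced.wInv' {n : ℕ} {w : List (Letter n)} (h : Reduced w) : Reduced (wInv w) := by
  rw [Reduced, wInv]
  show List.IsChain _ _
  rw [List.isChain_reverse, List.isChain_map]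
  refine (List.isChain_iff_getElem.mpr ?_)
  have h' := List.isChain_iff_getElem.mp h
  intro i hi
  have hthis := h' i hi
  simp only [flip, List.get_eq_getElem, linv_linv] at hthis ⊢
  intro hc
  exact hthis hc.symm

lemma wInv_cons {n : ℕ} (a : Letter n) (u : List (Letter n)) :
    wInv (a :: u) = wInv u ++ [linv a] := by
  simp [wInv]

lemma dropLast_wInv {n : ℕ} (w : List (Letter n)) :
    (wInv w).dropLast = wInv (w.drop 1) := by
  cases w with
  | nil => simp [wInv]
  | cons a u => rw [wInv_cons]; simp

lemma wInv_ne_self {n : ℕ} {v : List (Letter n)} (hred : Reduced v) (hne : v ≠ []) :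
    wInv v ≠ v := by
  intro h
  set L := v.length with hL
  have hL1 : 1 ≤ L := List.length_pos_iff.mpr hne
  have key : ∀ j (hj : j < L), v[j] = linv (v[L - 1 - j]'(by omega)) := by
    intro j hj
    have h1 : (wInv v)[j]? = v[j]? := by rw [h]
    rw [List.getElem?_eq_getElem (by simpa using hj), List.getElem?_eq_getElem hj] at h1
    have h2 := Option.some.inj h1
    have h3 := (wInv_getElem v j hj).symm.trans h2
    exact h3.symm
  rcases Nat.even_or_odd L with ⟨t, ht⟩ | ⟨t, ht⟩
  · -- L = 2t, t ≥ 1; v[t] = linv v[t-1] contradicts Reduced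
    have ht1 : 1 ≤ t := by omega
    have hk := key t (by omega)
    simp only [show L - 1 - t = t - 1 by omega] at hk
    have hch := List.isChain_iff_getElem.mp hred (t-1) (by simp only [← hL]; omega)
    apply hch
    simp only [List.get_eq_getElem, show t - 1 + 1 = t by omega]
    exact hk
  · -- L = 2t+1; v[t] = linv v[t]
    have hk := key t (by omega)
    simp only [show L - 1 - t = t by omega] at hk
    exact (linv_ne_self _) hk.symm

/-- Positional form of cyclic reducedness. -/
def CRpos {n : ℕ} (w : List (Letter n)) : Prop :=
  ∀ j (hj : j < w.length),
    w[(j+1) % w.length]'(Nat.mod_lt _ (by omega)) ≠ linv w[j]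

lemma CyclicallyReduced.crpos {n : ℕ} {w : List (Letter n)}
    (h : CyclicallyReduced w) (hw : w ≠ []) : CRpos w := by
  intro j hj
  by_cases hj1 : j + 1 < w.length
  · have := List.isChain_iff_getElem.mp h.1 j (by omega)
    intro hc; apply this
    simp only [Nat.mod_eq_of_lt hj1] at hc
    exact hc
  · have hj1' : j + 1 = w.length := by omega
    have h0 : (j+1) % w.length = 0 := by rw [hj1']; simp
    intro hc
    simp only [h0] at hc
    have hhead : w.head? = some (w[0]'(by omega)) := by
      cases w with
      | nil => simp at hw
      | cons a u => rfl
    have hlast : w.getLast? = some (w[j]'hj) := by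
      rw [List.getLast?_eq_getLast hw]
      congr 1
      rw [List.getLast_eq_getElem]
      congr 1
      omega
    exact h.2 _ _ hhead hlast hc

lemma CRpos.rotate {n : ℕ} {w : List (Letter n)} (h : CRpos w) (hw : w ≠ []) (i : ℕ) :
    CRpos (w.rotate i) := by
  have hL : 0 < w.length := List.length_pos_iff.mpr hw
  intro j hj
  intro hc
  simp only [List.getElem_rotate, List.length_rotate] at hc
  simp only [Nat.mod_add_mod] at hc
  apply h ((j + i) % w.length) (Nat.mod_lt _ hL)
  simp only [Nat.mod_add_mod]
  simp only [show j + i + 1 = j + 1 + i by omega]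
  exact hc

lemma CRpos.lpow_reduced {n : ℕ} {w : List (Letter n)} (h : CRpos w) (hw : w ≠ [])
    (m : ℕ) : Reduced (lpow w m) := by
  have hL : 0 < w.length := List.length_pos_iff.mpr hw
  refine List.isChain_iff_getElem.mpr ?_
  intro i hi
  have hlen : (lpow w m).length = m * w.length := lpow_length w m
  intro hc
  rw [lpow_getElem w m i (by omega) hL, lpow_getElem w m (i+1) (by omega) hL] at hc
  apply h (i % w.length) (Nat.mod_lt _ hL)
  simp only [Nat.mod_add_mod]
  exact hc
lemma orientedOcc_eq_sum {n : ℕ} (u w : List (Letter n)) :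
    orientedOcc u w = ∑ i ∈ Finset.range w.length,
      if u <+: lpow (w.rotate i) (u.length + 1) then 1 else 0 := by
  rw [orientedOcc, Finset.card_filter]

lemma orientedOcc_eq_zero {n : ℕ} {u w : List (Letter n)} (hu : ¬ Reduced u)
    (hw : w ≠ []) (hcr : CyclicallyReduced w) : orientedOcc u w = 0 := by
  rw [orientedOcc, Finset.card_eq_zero, Finset.filter_eq_empty_iff]
  intro i _
  intro hpre
  apply hu
  have hrot : w.rotate i ≠ [] := by
    intro hc
    apply hw
    have := congrArg List.length hc
    simp at this
    simpa [List.length_eq_zero_iff] using this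
  have hred : Reduced (lpow (w.rotate i) (u.length + 1)) :=
    CRpos.lpow_reduced ((hcr.crpos hw).rotate hw i) hrot _
  exact List.IsChain.prefix hred hpre

lemma occ_eq_zero {n : ℕ} {u w : List (Letter n)} (hu : ¬ Reduced u)
    (hw : w ≠ []) (hcr : CyclicallyReduced w) : occ u w = 0 := by
  have huI : ¬ Reduced (wInv u) := by
    intro hc
    apply hu
    have := hc.wInv'
    rwa [wInv_wInv] at this
  rw [occ, orientedOcc_eq_zero hu hw hcr, orientedOcc_eq_zero huI hw hcr]

lemma pocc_congr {n : ℕ} {u w : List (Letter n)} (hw : w ≠ []) {m1 m2 : ℕ}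
    (h1 : u.length ≤ m1) (h2 : u.length ≤ m2) (i : ℕ) :
    (u <+: lpow (w.rotate i) m1) ↔ (u <+: lpow (w.rotate i) m2) := by
  have hL : 0 < w.length := List.length_pos_iff.mpr hw
  apply prefix_lpow_congr
  · rw [List.length_rotate]
    exact le_trans h1 (Nat.le_mul_of_pos_right m1 hL)
  · rw [List.length_rotate]
    exact le_trans h2 (Nat.le_mul_of_pos_right m2 hL)
lemma rotate_ne_nil {n : ℕ} {w : List (Letter n)} (hw : w ≠ []) (i : ℕ) :
    w.rotate i ≠ [] := by
  intro hc
  apply hw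
  rw [← List.length_eq_zero_iff] at hc ⊢
  rwa [List.length_rotate] at hc

/-- Right extension: each position carrying `u` carries `u ++ [a]` for exactly one `a`. -/
lemma orientedOcc_right_ext {n : ℕ} (u w : List (Letter n)) (hw : w ≠ []) :
    orientedOcc u w = ∑ a : Letter n, orientedOcc (u ++ [a]) w := by
  have hL : 0 < w.length := List.length_pos_iff.mpr hw
  simp only [orientedOcc_eq_sum, List.length_append, List.length_singleton]
  rw [Finset.sum_comm]
  refine Finset.sum_congr rfl ?_
  intro i _
  set K := u.length with hK
  set L := lpow (w.rotate i) (K + 1 + 1) with hLdef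
  have hlenL : L.length = (K + 2) * w.length := by
    rw [hLdef, lpow_length, List.length_rotate]
  have hKL : K < L.length := by
    rw [hlenL]; nlinarith
  have key : ∀ a : Letter n, (u ++ [a] <+: L) ↔ (u <+: L ∧ a = L[K]'hKL) := by
    intro a
    rw [List.prefix_iff_eq_take, List.prefix_iff_eq_take]
    rw [List.length_append, List.length_singleton, ← hK, List.take_succ,
      List.getElem?_eq_getElem hKL]
    constructor
    · intro h
      have h1 : u = L.take K := by
        have h' := congrArg (List.take K) h
        rwa [List.take_left' (by rw [← hK]),
          List.take_left' (by rw [List.length_take]; omega)] at h'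
      refine ⟨h1, ?_⟩
      have h2 := congrArg (fun l => l.getLast?) h
      simp only [Option.toList_some] at h
      have h3 : (u ++ [a]).getLast? = some a := by simp
      have h4 : (L.take K ++ [L[K]'hKL]).getLast? = some (L[K]'hKL) :=
        List.getLast?_concat
      rw [h] at h3
      rw [h4] at h3
      exact (Option.some.inj h3).symm
    · rintro ⟨h1, h2⟩
      simp only [Option.toList_some]
      rw [h1, h2]
  have hu_iff : (u <+: lpow (w.rotate i) (K + 1)) ↔ (u <+: L) := by
    rw [hLdef]
    exact pocc_congr hw (Nat.le_succ K) (by omega) i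
  simp only [hu_iff]
  by_cases hu : u <+: L
  · simp only [key, hu, true_and, if_pos]
    rw [Finset.sum_ite_eq' Finset.univ (L[K]'hKL) (fun _ => 1)]
    simp
  · simp only [key, hu, false_and, if_false, if_neg hu]
    simp

lemma lpow_concat {α : Type*} (b : α) (t : List α) (m : ℕ) :
    b :: lpow (t ++ [b]) m = lpow (b :: t) m ++ [b] := by
  induction m with
  | zero => simp [lpow]
  | succ m ih =>
    show b :: ((t ++ [b]) ++ lpow (t ++ [b]) m) = ((b :: t) ++ lpow (b :: t) m) ++ [b]
    simp only [List.append_assoc, List.cons_append, List.singleton_append]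
    rw [← ih]
    simp

/-- Left extension: shifting positions by one. -/
lemma orientedOcc_left_ext {n : ℕ} (u w : List (Letter n)) (hw : w ≠ []) :
    orientedOcc u w = ∑ a : Letter n, orientedOcc (a :: u) w := by
  have hL : 0 < w.length := List.length_pos_iff.mpr hw
  simp only [orientedOcc_eq_sum, List.length_cons]
  rw [Finset.sum_comm]
  set K := u.length with hK
  set N := w.length with hN
  have step : ∀ i ∈ Finset.range N,
      (∑ a : Letter n, if (a :: u) <+: lpow (w.rotate i) (K + 1 + 1) then 1 else 0)
      = if u <+: lpow (w.rotate ((i+1) % N)) (K + 1) then (1 : ℕ) else 0 := by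
    intro i _
    obtain ⟨b, t, hbt⟩ : ∃ b t, w.rotate i = b :: t := by
      cases hrw : w.rotate i with
      | nil => exact absurd hrw (rotate_ne_nil hw i)
      | cons b t => exact ⟨b, t, rfl⟩
    have hrot1 : t ++ [b] = w.rotate (i + 1) := by
      have : (w.rotate i).rotate 1 = w.rotate (i + 1) := List.rotate_rotate w i 1
      rw [hbt] at this
      rw [← this]
      rw [show (1 : ℕ) = 0 + 1 from rfl, List.rotate_cons_succ, List.rotate_zero]
    have key : ∀ a : Letter n,
        ((a :: u) <+: lpow (b :: t) (K + 1 + 1)) ↔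
        (a = b ∧ u <+: lpow (t ++ [b]) (K + 2)) := by
      intro a
      have h1 : lpow (b :: t) (K + 1 + 1) ++ [b] = b :: lpow (t ++ [b]) (K + 2) :=
        (lpow_concat b t (K + 2)).symm
      constructor
      · intro h
        have h2 : (a :: u) <+: b :: lpow (t ++ [b]) (K + 2) := by
          rw [← h1]
          exact h.trans ⟨[b], rfl⟩
        rw [List.cons_prefix_cons] at h2
        exact h2
      · intro ⟨ha, h2⟩
        have h3 : (a :: u) <+: b :: lpow (t ++ [b]) (K + 2) := by
          rw [List.cons_prefix_cons]; exact ⟨ha, h2⟩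
        rw [← h1] at h3
        refine List.prefix_of_prefix_length_le h3 ⟨[b], rfl⟩ ?_
        simp only [List.length_cons, lpow_length, List.length_append, List.length_singleton]
        have : 0 < t.length + 1 := by omega
        nlinarith
    have hmod : w.rotate ((i+1) % N) = w.rotate (i+1) := by
      rw [hN]; exact List.rotate_mod w (i+1)
    have hiff : ∀ a : Letter n,
        ((a :: u) <+: lpow (w.rotate i) (K + 1 + 1)) ↔
        (a = b ∧ u <+: lpow (w.rotate ((i+1) % N)) (K + 1)) := by
      intro a
      rw [hbt, key a, hrot1, ← hmod,
        ← pocc_congr hw (Nat.le_succ K) (by omega) ((i+1) % N)]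
    simp only [hiff]
    by_cases h2 : u <+: lpow (w.rotate ((i+1) % N)) (K + 1)
    · simp only [h2, and_true, if_pos]
      rw [Finset.sum_ite_eq' Finset.univ b (fun _ => 1)]
      simp
    · simp only [h2, and_false, if_false, if_neg h2]
      simp
  rw [Finset.sum_congr rfl step]
  -- now reindex i ↦ (i+1) % N
  refine (Finset.sum_nbij' (fun i => (i + 1) % N) (fun i => (i + (N - 1)) % N)
    ?_ ?_ ?_ ?_ ?_).symm
  · intro a ha; exact Finset.mem_range.mpr (Nat.mod_lt _ hL)
  · intro a ha; exact Finset.mem_range.mpr (Nat.mod_lt _ hL)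
  · intro a ha
    show ((a + 1) % N + (N - 1)) % N = a
    rw [Nat.mod_add_mod]
    rw [show a + 1 + (N - 1) = a + N by omega, Nat.add_mod_right]
    exact Nat.mod_eq_of_lt (Finset.mem_range.mp ha)
  · intro a ha
    show ((a + (N - 1)) % N + 1) % N = a
    rw [Nat.mod_add_mod]
    rw [show a + (N - 1) + 1 = a + N by omega, Nat.add_mod_right]
    exact Nat.mod_eq_of_lt (Finset.mem_range.mp ha)
  · intro a ha; rfl
lemma RW.ext' {n k : ℕ} {w1 w2 : RW n k} (h : w1.val = w2.val) : w1 = w2 := by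
  cases w1; cases w2; cases h; rfl

lemma RW.ne_nil {n k : ℕ} (hk : 1 ≤ k) (w : RW n k) : w.val ≠ [] := by
  intro hc
  have := w.len
  rw [hc] at this
  simp at this
  omega

def linvEquiv (n : ℕ) : Letter n ≃ Letter n :=
  ⟨linv, linv, linv_linv, linv_linv⟩

lemma sum_occ_letters {n : ℕ} (w0 v : List (Letter n)) (hw : w0 ≠ []) :
    ∑ a : Letter n, (occ (a :: v) w0 : ℤ) = (occ v w0 : ℤ) := by
  simp only [occ]
  push_cast
  rw [Finset.sum_add_distrib]
  congr 1
  · exact_mod_cast (orientedOcc_left_ext v w0 hw).symm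
  · simp only [wInv_cons]
    rw [Fintype.sum_equiv (linvEquiv n)
      (fun a => (orientedOcc (wInv v ++ [linv a]) w0 : ℤ))
      (fun b => (orientedOcc (wInv v ++ [b]) w0 : ℤ)) (fun x => rfl)]
    exact_mod_cast (orientedOcc_right_ext (wInv v) w0 hw).symm

lemma main_count {n k : ℕ} (hk : 1 ≤ k) {w0 : List (Letter n)} (hw : w0 ≠ [])
    (hcr : CyclicallyReduced w0) {v : List (Letter n)}
    (hvlen : v.length = k - 1) :
    ∑ w : RW n k, (if w.val.drop 1 = v then (occ w.val w0 : ℤ) else 0)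
      = (occ v w0 : ℤ) := by
  rw [← sum_occ_letters w0 v hw]
  have hstep1 : ∀ a : Letter n, (occ (a :: v) w0 : ℤ)
      = ∑ w : RW n k, (if w.val = a :: v then (occ w.val w0 : ℤ) else 0) := by
    intro a
    by_cases hred : Reduced (a :: v)
    · have hlen : (a :: v).length = k := by simp [hvlen]; omega
      have hiff : ∀ w : RW n k, (w.val = a :: v) ↔ (w = ⟨a :: v, hred, hlen⟩) := by
        intro w
        constructor
        · intro h; exact RW.ext' h
        · intro h; rw [h]
      simp only [hiff]
      rw [Finset.sum_ite_eq' Finset.univ (⟨a :: v, hred, hlen⟩ : RW n k)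
        (fun w => (occ w.val w0 : ℤ))]
      simp
    · rw [occ_eq_zero hred hw hcr]
      push_cast
      symm
      apply Finset.sum_eq_zero
      intro w _
      rw [if_neg]
      intro hc; apply hred; rw [← hc]; exact w.red
  rw [Finset.sum_congr rfl (fun a _ => hstep1 a), Finset.sum_comm]
  refine Finset.sum_congr rfl ?_
  intro w _
  by_cases hd : w.val.drop 1 = v
  · rw [if_pos hd]
    obtain ⟨b, t, hbt⟩ : ∃ b t, w.val = b :: t := by
      cases hval : w.val with
      | nil => exact absurd hval (RW.ne_nil hk w)
      | cons b t => exact ⟨b, t, rfl⟩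
    have ht : t = v := by
      have := hd; rw [hbt] at this; simpa using this
    subst ht
    have hiff : ∀ a : Letter n, (w.val = a :: t) ↔ (a = b) := by
      intro a
      rw [hbt]
      constructor
      · intro h; exact (((List.cons.injEq _ _ _ _).mp h).1).symm
      · intro h; rw [h]
    simp only [hiff]
    rw [Finset.sum_ite_eq' Finset.univ b (fun _ => (occ w.val w0 : ℤ))]
    simp
  · rw [if_neg hd]
    symm
    apply Finset.sum_eq_zero
    intro a _
    rw [if_neg]
    intro hc; apply hd; rw [hc]; simp

def wInvEquiv (n k : ℕ) : RW n k ≃ RW n k where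
  toFun w := ⟨wInv w.val, w.red.wInv', by simp [w.len]⟩
  invFun w := ⟨wInv w.val, w.red.wInv', by simp [w.len]⟩
  left_inv w := RW.ext' (by simp)
  right_inv w := RW.ext' (by simp)

lemma drop_one_wInv {n : ℕ} (u : List (Letter n)) :
    (wInv u).drop 1 = wInv u.dropLast := by
  have := dropLast_wInv (wInv u)
  rw [wInv_wInv] at this
  have h2 := congrArg wInv this
  rw [wInv_wInv] at h2
  exact h2.symm

lemma sigma_split {n k : ℕ} (hk : 1 ≤ k)
    (σ : List (Letter n) → List (Letter n))
    (hσ1 : ∀ u : List (Letter n), σ u = u ∨ σ u = wInv u)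
    (hσ2 : ∀ u : List (Letter n), σ (wInv u) = σ u)
    (w0 v : List (Letter n)) :
    ∑ w : RW n k,
      ((if σ w.val = w.val ∧ w.val.drop 1 = v then (occ w.val w0 : ℤ) else 0)
        + (if σ w.val = w.val ∧ w.val.dropLast = wInv v then (occ w.val w0 : ℤ) else 0))
      = ∑ w : RW n k, (if w.val.drop 1 = v then (occ w.val w0 : ℤ) else 0) := by
  rw [Finset.sum_add_distrib]
  have hsec : ∑ w : RW n k,
        (if σ w.val = w.val ∧ w.val.dropLast = wInv v then (occ w.val w0 : ℤ) else 0)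
      = ∑ w : RW n k,
        (if σ w.val = wInv w.val ∧ w.val.drop 1 = v then (occ w.val w0 : ℤ) else 0) := by
    refine Fintype.sum_equiv (wInvEquiv n k) _ _ ?_
    intro w
    show (if σ w.val = w.val ∧ w.val.dropLast = wInv v then (occ w.val w0 : ℤ) else 0)
      = (if σ (wInv w.val) = wInv (wInv w.val) ∧ (wInv w.val).drop 1 = v
          then (occ (wInv w.val) w0 : ℤ) else 0)
    have hcd : (w.val.dropLast = wInv v) ↔ (wInv w.val.dropLast = v) :=
      ⟨fun h => by rw [h, wInv_wInv], fun h => by rw [← h, wInv_wInv]⟩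
    simp only [hσ2, wInv_wInv, drop_one_wInv, occ_wInv, hcd]
  rw [hsec, ← Finset.sum_add_distrib]
  refine Finset.sum_congr rfl ?_
  intro w _
  by_cases hd : w.val.drop 1 = v
  · simp only [hd, eq_self_iff_true, and_true, if_true]
    have hne := wInv_ne_self w.red (RW.ne_nil hk w)
    rcases hσ1 w.val with h | h
    · rw [if_pos h, if_neg (fun hc => hne (h.symm.trans hc).symm), add_zero]
    · rw [if_pos h, if_neg (fun hc => hne (hc.symm.trans h).symm), zero_add]
  · simp only [hd, and_false, if_false, add_zero]
lemma sameUW_trans {n : ℕ} {s u v : List (Letter n)}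
    (h1 : s = u ∨ s = wInv u) (h2 : v = u ∨ v = wInv u) :
    s = v ∨ s = wInv v := by
  rcases h1 with h1 | h1 <;> rcases h2 with h2 | h2
  · left; rw [h1, h2]
  · right; rw [h1, h2, wInv_wInv]
  · right; rw [h1, h2]
  · left; rw [h1, h2]

lemma class_char {n : ℕ} {σ : List (Letter n) → List (Letter n)}
    (hσ2 : ∀ u, σ (wInv u) = σ u)
    {s v : List (Letter n)} (hvred : Reduced v) (hvne : v ≠ []) (hσv : σ v = v)
    (hrel : s = v ∨ s = wInv v) :
    (σ s = s ↔ s = v) ∧ (σ s = wInv s ↔ s = wInv v) := by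
  have hvI : wInv v ≠ v := wInv_ne_self hvred hvne
  constructor
  · constructor
    · intro h
      rcases hrel with rfl | rfl
      · rfl
      · exfalso
        rw [hσ2 v, hσv] at h
        exact hvI h.symm
    · intro h; rw [h, hσv]
  · constructor
    · intro h
      rcases hrel with rfl | rfl
      · exfalso; rw [hσv] at h; exact hvI h.symm
      · rfl
    · intro h; rw [h, hσ2, hσv, wInv_wInv]

lemma rel_of_class_eq {n m : ℕ} {t u0 : RW n m}
    (h : (Quotient.mk (uwSetoid n m) t : UW n m) = Quotient.mk (uwSetoid n m) u0) :
    t.val = u0.val ∨ t.val = wInv u0.val := by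
  have h2 := Quotient.exact h
  rcases h2 with h2 | h2
  · left; exact h2.symm
  · right
    have := congrArg wInv h2
    rw [wInv_wInv] at this
    exact this.symm

lemma class_eq_of_rel {n m : ℕ} {t u0 : RW n m}
    (h : t.val = u0.val ∨ t.val = wInv u0.val) :
    (Quotient.mk (uwSetoid n m) t : UW n m) = Quotient.mk (uwSetoid n m) u0 := by
  apply Quotient.sound
  rcases h with h | h
  · left; exact h.symm
  · right
    have := congrArg wInv h
    rw [wInv_wInv] at this
    exact this.symm

lemma rw_sum_collapse {n k : ℕ} (F : RW n k → ℤ) (x : Mk n k) (C : RW n k → Prop)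
    [DecidablePred C] :
    ∑ wb : UW n k,
        (∑ w : RW n k, if Quotient.mk (uwSetoid n k) w = wb ∧ C w then F w else 0) * x wb
      = ∑ w : RW n k, (if C w then F w * x (Quotient.mk (uwSetoid n k) w) else 0) := by
  simp only [Finset.sum_mul]
  rw [Finset.sum_comm]
  refine Finset.sum_congr rfl ?_
  intro w _
  have h : ∀ wb : UW n k,
      (if Quotient.mk (uwSetoid n k) w = wb ∧ C w then F w else 0) * x wb
        = if Quotient.mk (uwSetoid n k) w = wb then (if C w then F w * x wb else 0) else 0 := by
    intro wb
    by_cases h1 : Quotient.mk (uwSetoid n k) w = wb <;> by_cases h2 : C w <;>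
      simp [h1, h2]
  rw [Finset.sum_congr rfl (fun wb _ => h wb)]
  rw [Finset.sum_ite_eq Finset.univ (Quotient.mk (uwSetoid n k) w)]
  simp

lemma ite_split (C c1 c2 : Prop) [Decidable C] [Decidable c1] [Decidable c2] (x : ℤ) :
    (if C then ((if c1 then (1:ℤ) else 0) + (if c2 then 1 else 0)) * x else 0)
      = (if C ∧ c1 then x else 0) + (if C ∧ c2 then x else 0) := by
  by_cases h : C <;> by_cases h1 : c1 <;> by_cases h2 : c2 <;>
    simp [h, h1, h2] <;> ring

/-- For `n ≥ 2`, `k ≥ 2` and any orientation section `σ`, for every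
cyclic word `W` one has `p←_k (π_k W) = π_{k-1} W` and `p→_k (π_k W) = π_{k-1} W`;
in particular there is a ℤ-linear map `p_k : M_k → M_{k-1}` with `p_k ∘ π_k = π_{k-1}`. -/
theorem pk_compat_pik (n k : ℕ) (hn : 2 ≤ n) (hk : 2 ≤ k)
    (σ : List (Letter n) → List (Letter n))
    (hσ1 : ∀ u : List (Letter n), σ u = u ∨ σ u = wInv u)
    (hσ2 : ∀ u : List (Letter n), σ (wInv u) = σ u) :
    (∀ w : List (Letter n), w ≠ [] → CyclicallyReduced w →
        pOut n k σ (pik n k w) = pik n (k - 1) w ∧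
        pIn n k σ (pik n k w) = pik n (k - 1) w) ∧
    ∃ p : Mk n k →ₗ[ℤ] Mk n (k - 1),
      ∀ w : List (Letter n), w ≠ [] → CyclicallyReduced w →
        p (pik n k w) = pik n (k - 1) w := by
  have hk1 : 1 ≤ k := by omega
  have hmain : ∀ w0 : List (Letter n), w0 ≠ [] → CyclicallyReduced w0 →
      pOut n k σ (pik n k w0) = pik n (k - 1) w0 ∧
      pIn n k σ (pik n k w0) = pik n (k - 1) w0 := by
    intro w0 hw hcr
    have key : ∀ u0 : RW n (k-1),
        (pOut n k σ (pik n k w0) (Quotient.mk (uwSetoid n (k-1)) u0)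
          = pik n (k-1) w0 (Quotient.mk (uwSetoid n (k-1)) u0)) ∧
        (pIn n k σ (pik n k w0) (Quotient.mk (uwSetoid n (k-1)) u0)
          = pik n (k-1) w0 (Quotient.mk (uwSetoid n (k-1)) u0)) := by
      intro u0
      set v := σ u0.val with hv
      have hrelu : v = u0.val ∨ v = wInv u0.val := hσ1 u0.val
      have hvred : Reduced v := by
        rcases hrelu with h | h
        · rw [h]; exact u0.red
        · rw [h]; exact u0.red.wInv'
      have hvlen : v.length = k - 1 := by
        rcases hrelu with h | h
        · rw [h]; exact u0.len
        · rw [h, wInv_length]; exact u0.len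
      have hvne : v ≠ [] := by
        intro hc; rw [hc] at hvlen; simp at hvlen; omega
      have hσv : σ v = v := by
        rcases hσ1 u0.val with h | h
        · rw [hv, h]; exact h
        · rw [hv, h, hσ2]; exact h
      have hrelu' : u0.val = v ∨ u0.val = wInv v := by
        rcases hrelu with h | h
        · left; exact h.symm
        · right
          have := congrArg wInv h
          rw [wInv_wInv] at this
          rw [← this]
      have hpik : pik n (k-1) w0 (Quotient.mk (uwSetoid n (k-1)) u0)
          = (occ v w0 : ℤ) := by
        show (occ u0.val w0 : ℤ) = (occ v w0 : ℤ)
        rcases hrelu with h | h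
        · rw [h]
        · rw [h, occ_wInv]
      have hchar : ∀ t : RW n (k-1),
          ((Quotient.mk (uwSetoid n (k-1)) t = Quotient.mk (uwSetoid n (k-1)) u0
              ∧ σ t.val = t.val) ↔ t.val = v)
          ∧ ((Quotient.mk (uwSetoid n (k-1)) t = Quotient.mk (uwSetoid n (k-1)) u0
              ∧ σ t.val = wInv t.val) ↔ t.val = wInv v) := by
        intro t
        constructor
        · constructor
          · rintro ⟨hclass, hσs⟩
            exact ((class_char hσ2 hvred hvne hσv
              (sameUW_trans (rel_of_class_eq hclass) hrelu)).1).mp hσs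
          · intro h
            refine ⟨class_eq_of_rel (sameUW_trans (Or.inl h) hrelu'), ?_⟩
            exact ((class_char hσ2 hvred hvne hσv (Or.inl h)).1).mpr h
        · constructor
          · rintro ⟨hclass, hσs⟩
            exact ((class_char hσ2 hvred hvne hσv
              (sameUW_trans (rel_of_class_eq hclass) hrelu)).2).mp hσs
          · intro h
            refine ⟨class_eq_of_rel (sameUW_trans (Or.inr h) hrelu'), ?_⟩
            exact ((class_char hσ2 hvred hvne hσv (Or.inr h)).2).mpr h
      have hsuf1 : ∀ w : RW n k,
          (sufC w = Quotient.mk (uwSetoid n (k-1)) u0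
            ∧ σ (w.val.drop 1) = w.val.drop 1) ↔ (w.val.drop 1 = v) := by
        intro w
        exact (hchar ⟨w.val.drop 1, w.red.drop' 1, by simp [w.len]⟩).1
      have hsuf2 : ∀ w : RW n k,
          (sufC w = Quotient.mk (uwSetoid n (k-1)) u0
            ∧ σ (w.val.drop 1) = wInv (w.val.drop 1)) ↔ (w.val.drop 1 = wInv v) := by
        intro w
        exact (hchar ⟨w.val.drop 1, w.red.drop' 1, by simp [w.len]⟩).2
      have hpre1 : ∀ w : RW n k,
          (preC w = Quotient.mk (uwSetoid n (k-1)) u0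
            ∧ σ (w.val.dropLast) = wInv (w.val.dropLast)) ↔ (w.val.dropLast = wInv v) := by
        intro w
        exact (hchar ⟨w.val.dropLast, w.red.dropLast', by simp [w.len]⟩).2
      have hpre2 : ∀ w : RW n k,
          (preC w = Quotient.mk (uwSetoid n (k-1)) u0
            ∧ σ (w.val.dropLast) = w.val.dropLast) ↔ (w.val.dropLast = wInv (wInv v)) := by
        intro w
        rw [wInv_wInv]
        exact (hchar ⟨w.val.dropLast, w.red.dropLast', by simp [w.len]⟩).1
      have hxval : ∀ w : RW n k,
          pik n k w0 (Quotient.mk (uwSetoid n k) w) = (occ w.val w0 : ℤ) := fun _ => rfl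
      have hout : pOut n k σ (pik n k w0) (Quotient.mk (uwSetoid n (k-1)) u0)
          = (occ v w0 : ℤ) := by
        show ((AOut n k σ).mulVecLin (pik n k w0)) (Quotient.mk (uwSetoid n (k-1)) u0) = _
        rw [Matrix.mulVecLin_apply]
        show ∑ wb : UW n k,
          AOut n k σ (Quotient.mk (uwSetoid n (k-1)) u0) wb * pik n k w0 wb = _
        simp only [AOut]
        rw [rw_sum_collapse]
        simp only [ite_split]
        simp only [hsuf1, hpre1, hxval]
        rw [sigma_split hk1 σ hσ1 hσ2 w0 v, main_count hk1 hw hcr hvlen]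
      have hin : pIn n k σ (pik n k w0) (Quotient.mk (uwSetoid n (k-1)) u0)
          = (occ v w0 : ℤ) := by
        show ((AIn n k σ).mulVecLin (pik n k w0)) (Quotient.mk (uwSetoid n (k-1)) u0) = _
        rw [Matrix.mulVecLin_apply]
        show ∑ wb : UW n k,
          AIn n k σ (Quotient.mk (uwSetoid n (k-1)) u0) wb * pik n k w0 wb = _
        simp only [AIn]
        rw [rw_sum_collapse]
        simp only [ite_split]
        simp only [hsuf2, hpre2, hxval]
        have hvlenI : (wInv v).length = k - 1 := by rw [wInv_length]; exact hvlen
        rw [sigma_split hk1 σ hσ1 hσ2 w0 (wInv v), main_count hk1 hw hcr hvlenI]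
        exact_mod_cast congrArg (fun m : ℕ => (m : ℤ)) (occ_wInv v w0)
      exact ⟨hout.trans hpik.symm, hin.trans hpik.symm⟩
    constructor
    · funext ub
      exact Quotient.inductionOn ub (fun u0 => (key u0).1)
    · funext ub
      exact Quotient.inductionOn ub (fun u0 => (key u0).2)
  exact ⟨hmain, ⟨pOut n k σ, fun w hw hcr => (hmain w hw hcr).1⟩⟩
end

section
/- Let q ≥ 2 and m ≥ 1. Let T be the set of finite lists over Fin q, partially ordered by the prefix relation, and order T × T componentwise. Let M = {(a,b) ∈ T × T : |a| = |b| = m}, and let X ⊆ {(a,b) ∈ T × T : |a| ≤ m and |b| ≤ m} be such that for every y ∈ M there is exactly one x ∈ X with x ≤ y. If the pair of empty lists is not in X, then X contains a full paradigm: there exist a ∈ T and b₀ ∈ T such that either {(a, b₀ ++ [i]) : i ∈ Fin q} ⊆ X or {(b₀ ++ [i], a) : i ∈ Fin q} ⊆ X. -/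
private lemma exists_max_nat' {P : ℕ → Prop} {m : ℕ} (h : ∃ n, P n)
    (hb : ∀ n, P n → n ≤ m) : ∃ n, P n ∧ ∀ k, P k → k ≤ n := by
  classical
  obtain ⟨n, hn⟩ := h
  exact ⟨Nat.findGreatest P m, Nat.findGreatest_spec (hb n hn) hn,
    fun k hk => Nat.le_findGreatest (hb k hk) hk⟩

private lemma key_paradigm (q m : ℕ) (hq : 2 ≤ q)
    (X : Set (List (Fin q) × List (Fin q)))
    (hX : X ⊆ {p : List (Fin q) × List (Fin q) | p.1.length ≤ m ∧ p.2.length ≤ m})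
    (huniq : ∀ y : List (Fin q) × List (Fin q), y.1.length = m → y.2.length = m →
      ∃! x : List (Fin q) × List (Fin q), x ∈ X ∧ x.1 <+: y.1 ∧ x.2 <+: y.2)
    (hne : ∃ p ∈ X, p.2 ≠ []) :
    ∃ a b₀ : List (Fin q),
      (∀ i : Fin q, (a, b₀ ++ [i]) ∈ X) ∨ (∀ i : Fin q, (b₀ ++ [i], a) ∈ X) := by
  have hq1 : 0 < q := by omega
  set z : Fin q := ⟨0, hq1⟩ with hz
  -- extension of a list to a leaf (length m)
  set ext : List (Fin q) → List (Fin q) := fun v => v ++ List.replicate (m - v.length) z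
    with hextdef
  have hext_len : ∀ v : List (Fin q), v.length ≤ m → (ext v).length = m := by
    intro v hv; simp [hextdef]; omega
  have hext_pre : ∀ v : List (Fin q), v <+: ext v := fun v => List.prefix_append _ _
  -- choose (a,b) ∈ X maximizing |b|*(m+1)+|a|
  obtain ⟨N, ⟨⟨a, b⟩, habX, hab⟩, hNmax⟩ :=
    exists_max_nat' (P := fun n => ∃ p ∈ X, p.2.length * (m+1) + p.1.length = n)
      (m := m * (m+1) + m)
      (by obtain ⟨p, hp, _⟩ := hne; exact ⟨_, p, hp, rfl⟩)
      (by rintro n ⟨p, hp, rfl⟩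
          have h1 := (hX hp).1; have h2 := (hX hp).2
          have : p.2.length * (m+1) ≤ m * (m+1) := Nat.mul_le_mul_right _ h2
          omega)
  simp only at hab
  have Pdom : ∀ p ∈ X, p.2.length * (m+1) + p.1.length ≤ N := fun p hp =>
    hNmax _ ⟨p, hp, rfl⟩
  have ham : a.length ≤ m := (hX habX).1
  have hbm : b.length ≤ m := (hX habX).2
  -- b ≠ []
  have hbne : b ≠ [] := by
    intro h
    obtain ⟨p, hp, hp2⟩ := hne
    have h1 := Pdom p hp
    have h2 : 1 ≤ p.2.length := List.length_pos_iff.mpr hp2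
    have h3 : p.2.length * (m+1) ≥ 1 * (m+1) := Nat.mul_le_mul_right _ h2
    have h4 : p.1.length ≤ m := (hX hp).1
    subst h; simp at hab; omega
  set b₀ : List (Fin q) := b.dropLast with hb₀
  have hb₀b : b₀ ++ [b.getLast hbne] = b := List.dropLast_append_getLast hbne
  have hb₀len : b₀.length + 1 = b.length := by
    have := (List.length_dropLast : b.dropLast.length = b.length - 1)
    have : 1 ≤ b.length := List.length_pos_iff.mpr hbne
    simp [hb₀, List.length_dropLast]; omega
  have hb₀pre : b₀ <+: b := List.dropLast_prefix b
  -- lengths of relevant leaves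
  have hbi_len : ∀ i : Fin q, (b₀ ++ [i]).length ≤ m := by
    intro i; simp; omega
  -- Sub-lemma A : for each i there is c <+: a with (c, b₀++[i]) ∈ X
  have subA : ∀ i : Fin q, ∃ c, c <+: a ∧ (c, b₀ ++ [i]) ∈ X := by
    intro i
    obtain ⟨⟨c, d⟩, ⟨hxX, hx1, hx2⟩, _⟩ :=
      huniq (ext a, ext (b₀ ++ [i])) (hext_len a ham) (hext_len _ (hbi_len i))
    simp only at hx1 hx2
    have hc_len : c.length ≤ m := (hX hxX).1
    have hd_len : d.length ≤ m := (hX hxX).2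
    have hdom := Pdom _ hxX
    simp only at hdom
    have hdb : d.length ≤ b.length := by
      rcases Nat.lt_or_ge b.length d.length with h | h
      · have : b.length * (m+1) + (m+1) ≤ d.length * (m+1) := by
          calc b.length * (m+1) + (m+1) = (b.length + 1) * (m+1) := by ring
          _ ≤ d.length * (m+1) := Nat.mul_le_mul_right _ h
        omega
      · exact h
    have hd_pre : d <+: b₀ ++ [i] :=
      List.prefix_of_prefix_length_le hx2 (hext_pre _) (by simp; omega)
    -- rule out d <+: b₀
    have hd_eq : d = b₀ ++ [i] := by
      by_cases hcase : d.length ≤ b₀.length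
      · exfalso
        have hdb₀ : d <+: b₀ :=
          List.prefix_of_prefix_length_le hd_pre (List.prefix_append _ _) hcase
        obtain ⟨u, ⟨_, _, _⟩, hu⟩ := huniq (ext a, ext b) (hext_len a ham) (hext_len b hbm)
        have e1 : (c, d) = u := hu (c, d) ⟨hxX, hx1, hdb₀.trans (hb₀pre.trans (hext_pre b))⟩
        have e2 : (a, b) = u := hu (a, b) ⟨habX, hext_pre a, hext_pre b⟩
        have hdb2 : d = b := congrArg Prod.snd (e1.trans e2.symm)
        have : d.length = b.length := by rw [hdb2]
        omega
      · exact hd_pre.eq_of_length (by simp; omega)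
    have hca : c <+: a := by
      refine List.prefix_of_prefix_length_le hx1 (hext_pre a) ?_
      have hdl : d.length = b.length := by rw [hd_eq]; simp; omega
      rw [hdl] at hdom
      omega
    exact ⟨c, hca, by rwa [hd_eq] at hxX⟩
  by_cases hall : ∀ i : Fin q, (a, b₀ ++ [i]) ∈ X
  · exact ⟨a, b₀, Or.inl hall⟩
  push_neg at hall
  obtain ⟨i, hi⟩ := hall
  obtain ⟨c, hca, hcX⟩ := subA i
  have hcnea : c ≠ a := fun h => hi (h ▸ hcX)
  have hcm : c.length ≤ m := hca.length_le.trans ham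
  have hclta : c.length < a.length := by
    rcases Nat.lt_or_ge c.length a.length with h | h
    · exact h
    · exact absurd (hca.eq_of_length (le_antisymm hca.length_le h)) hcnea
  -- Sub-lemma B : every leaf above c has some e with c ⊊ e, (e,b) ∈ X below it
  have subB : ∀ w : List (Fin q), c <+: w → w.length = m →
      ∃ e, c <+: e ∧ c ≠ e ∧ (e, b) ∈ X ∧ e <+: w := by
    intro w hcw hwm
    obtain ⟨⟨e, f⟩, ⟨hxX, hx1, hx2⟩, _⟩ := huniq (w, ext b) hwm (hext_len b hbm)
    simp only at hx1 hx2
    have hdom := Pdom _ hxX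
    simp only at hdom
    have he_len : e.length ≤ m := (hX hxX).1
    have hf_len : f.length ≤ m := (hX hxX).2
    have hfb_len : f.length ≤ b.length := by
      rcases Nat.lt_or_ge b.length f.length with h | h
      · have : b.length * (m+1) + (m+1) ≤ f.length * (m+1) := by
          calc b.length * (m+1) + (m+1) = (b.length + 1) * (m+1) := by ring
          _ ≤ f.length * (m+1) := Nat.mul_le_mul_right _ h
        omega
      · exact h
    have hfb : f <+: b := List.prefix_of_prefix_length_le hx2 (hext_pre b) hfb_len
    -- rule out f <+: b₀
    have hf_eq : f = b := by
      by_cases hcase : f.length ≤ b₀.length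
      · exfalso
        have hfb₀ : f <+: b₀ := List.prefix_of_prefix_length_le hfb hb₀pre hcase
        obtain ⟨u, _, hu⟩ := huniq (w, ext (b₀ ++ [i])) hwm (hext_len _ (hbi_len i))
        have e1 : (e, f) = u := hu (e, f)
          ⟨hxX, hx1, (hfb₀.trans (List.prefix_append _ _)).trans (hext_pre _)⟩
        have e2 : (c, b₀ ++ [i]) = u := hu (c, b₀ ++ [i]) ⟨hcX, hcw, hext_pre _⟩
        have : f = b₀ ++ [i] := congrArg Prod.snd (e1.trans e2.symm)
        rw [this] at hcase; simp at hcase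
      · exact hfb.eq_of_length (by omega)
    subst hf_eq
    -- compare e and c
    rcases List.prefix_or_prefix_of_prefix hx1 hcw with hec | hce
    · exfalso
      obtain ⟨u, _, hu⟩ := huniq (ext a, ext f) (hext_len a ham) (hext_len f hbm)
      have e1 : (e, f) = u := hu (e, f)
        ⟨hxX, (hec.trans hca).trans (hext_pre a), hext_pre f⟩
      have e2 : (a, f) = u := hu (a, f) ⟨habX, hext_pre a, hext_pre f⟩
      have hea : e = a := congrArg Prod.fst (e1.trans e2.symm)
      have h1 : e.length = a.length := by rw [hea]
      have h2 := hec.length_le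
      omega
    · have : c ≠ e := by
        intro h; subst h
        obtain ⟨u, _, hu⟩ := huniq (ext a, ext f) (hext_len a ham) (hext_len f hbm)
        have e1 : (c, f) = u := hu (c, f) ⟨hxX, hca.trans (hext_pre a), hext_pre f⟩
        have e2 : (a, f) = u := hu (a, f) ⟨habX, hext_pre a, hext_pre f⟩
        have : c = a := congrArg Prod.fst (e1.trans e2.symm)
        exact hcnea this
      exact ⟨e, hce, this, hxX, hx1⟩
  -- take e* of maximal length among {e : c ⊊ e, (e,b) ∈ X}
  obtain ⟨L, ⟨e', he'c, he'ne, he'X, he'len⟩, hLmax⟩ :=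
    exists_max_nat' (P := fun n => ∃ e, c <+: e ∧ c ≠ e ∧ (e, b) ∈ X ∧ e.length = n)
      (m := m)
      (by obtain ⟨e, h1, h2, h3, _⟩ := subB (ext c) (hext_pre c) (hext_len c hcm)
          exact ⟨e.length, e, h1, h2, h3, rfl⟩)
      (by rintro n ⟨e, _, _, heX, rfl⟩; exact (hX heX).1)
  have he'm : e'.length ≤ m := (hX he'X).1
  have he'nil : e' ≠ [] := by
    intro h; subst h
    exact he'ne (List.prefix_nil.mp he'c)
  set e₀ : List (Fin q) := e'.dropLast with he₀
  have he₀e' : e₀ ++ [e'.getLast he'nil] = e' := List.dropLast_append_getLast he'nil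
  have he₀len : e₀.length + 1 = e'.length := by
    have h1 : 1 ≤ e'.length := List.length_pos_iff.mpr he'nil
    simp [he₀, List.length_dropLast]; omega
  have hce'lt : c.length < e'.length := by
    rcases Nat.lt_or_ge c.length e'.length with h | h
    · exact h
    · exact absurd (he'c.eq_of_length (le_antisymm he'c.length_le h)) he'ne
  have hce₀ : c <+: e₀ :=
    List.prefix_of_prefix_length_le he'c (List.dropLast_prefix e') (by omega)
  refine ⟨b, e₀, Or.inr ?_⟩
  intro k
  have hek_len : (e₀ ++ [k]).length ≤ m := by simp; omega
  have hcek : c <+: e₀ ++ [k] := hce₀.trans (List.prefix_append _ _)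
  obtain ⟨e, hce, hcnee, heX, hew⟩ :=
    subB (ext (e₀ ++ [k])) (hcek.trans (hext_pre _)) (hext_len _ hek_len)
  have helen : e.length ≤ e'.length := he'len ▸ hLmax _ ⟨e, hce, hcnee, heX, rfl⟩
  have hee₀k : e = e₀ ++ [k] := by
    by_cases hcase : e.length ≤ e₀.length
    · exfalso
      have hee₀ : e <+: e₀ :=
        List.prefix_of_prefix_length_le hew ((List.prefix_append _ _).trans (hext_pre _)) hcase
      have hee' : e <+: e' := hee₀.trans (he₀e' ▸ List.prefix_append _ _)
      obtain ⟨u, _, hu⟩ := huniq (ext e', ext b) (hext_len e' he'm) (hext_len b hbm)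
      have e1 : (e, b) = u := hu (e, b) ⟨heX, hee'.trans (hext_pre e'), hext_pre b⟩
      have e2 : (e', b) = u := hu (e', b) ⟨he'X, hext_pre e', hext_pre b⟩
      have hee'' : e = e' := congrArg Prod.fst (e1.trans e2.symm)
      have : e.length = e'.length := by rw [hee'']
      omega
    · refine (List.prefix_of_prefix_length_le hew (hext_pre _) ?_).eq_of_length ?_
      · simp
        have := hew.length_le
        rw [hext_len _ hek_len] at this
        omega
      · simp; omega
  rwa [hee₀k] at heX

/-- Let `T` be the set of finite lists over `Fin q` (the rooted
`q`-regular tree, ordered by the prefix relation), `q ≥ 2`, `m ≥ 1`. If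
`X ⊆ {(a,b) : |a|,|b| ≤ m}` is such that every `(a,b)` with `|a| = |b| = m` lies above
exactly one element of `X`, and the pair of empty lists is not in `X`, then `X`
contains a full paradigm. -/
theorem exists_full_paradigm (q m : ℕ) (hq : 2 ≤ q) (hm : 1 ≤ m)
    (X : Set (List (Fin q) × List (Fin q)))
    (hX : X ⊆ {p : List (Fin q) × List (Fin q) | p.1.length ≤ m ∧ p.2.length ≤ m})
    (huniq : ∀ y : List (Fin q) × List (Fin q), y.1.length = m → y.2.length = m →
      ∃! x : List (Fin q) × List (Fin q), x ∈ X ∧ x.1 <+: y.1 ∧ x.2 <+: y.2)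
    (hroot : (([], []) : List (Fin q) × List (Fin q)) ∉ X) :
    ∃ a b₀ : List (Fin q),
      (∀ i : Fin q, (a, b₀ ++ [i]) ∈ X) ∨ (∀ i : Fin q, (b₀ ++ [i], a) ∈ X) := by
  have hq1 : 0 < q := by omega
  set z : Fin q := ⟨0, hq1⟩ with hz
  obtain ⟨⟨x1, x2⟩, ⟨hxX, _, _⟩, _⟩ :=
    huniq (List.replicate m z, List.replicate m z) (by simp) (by simp)
  by_cases hx2 : x2 ≠ []
  · exact key_paradigm q m hq X hX huniq ⟨(x1, x2), hxX, hx2⟩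
  · push_neg at hx2
    subst hx2
    have hx1 : x1 ≠ [] := by rintro rfl; exact hroot hxX
    -- apply key lemma to the swapped set
    set X' : Set (List (Fin q) × List (Fin q)) := {p | (p.2, p.1) ∈ X} with hX'def
    have hX' : X' ⊆ {p : List (Fin q) × List (Fin q) | p.1.length ≤ m ∧ p.2.length ≤ m} := by
      intro p hp; exact ⟨(hX hp).2, (hX hp).1⟩
    have huniq' : ∀ y : List (Fin q) × List (Fin q), y.1.length = m → y.2.length = m →
        ∃! x : List (Fin q) × List (Fin q), x ∈ X' ∧ x.1 <+: y.1 ∧ x.2 <+: y.2 := by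
      intro y hy1 hy2
      obtain ⟨w, ⟨hw1, hw2, hw3⟩, hu⟩ := huniq (y.2, y.1) hy2 hy1
      refine ⟨(w.2, w.1), ⟨by simp [hX'def, hw1], hw3, hw2⟩, ?_⟩
      rintro ⟨p1, p2⟩ ⟨hp1, hp2, hp3⟩
      have := hu (p2, p1) ⟨hp1, hp3, hp2⟩
      rw [Prod.ext_iff] at this ⊢
      exact ⟨this.2, this.1⟩
    obtain ⟨a, b₀, h | h⟩ :=
      key_paradigm q m hq X' hX' huniq' ⟨(([] : List (Fin q)), x1), hxX, hx1⟩
    · exact ⟨a, b₀, Or.inr h⟩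
    · exact ⟨a, b₀, Or.inl h⟩
end

section
/- Let n ≥ 2 and let φ be the automorphism of F_n with φ(x₁) = x₁x₂ and φ(xᵢ) = xᵢ for all i ≠ 1 (a Nielsen move). If u, v ∈ F_n are such that the concatenation of their reduced words is reduced (no cancellation between the last letter of u and the first letter of v), then |φ(uv)| ≥ |φ(u)| + |φ(v)| − 2; that is, at most one letter of φ(u) and one letter of φ(v) cancel in the product φ(u)φ(v). -/
set_option linter.unnecessarySeqFocus false

namespace NBC
variable {α : Type*} [DecidableEq α] {a b : α}

def NC (p q : α × Bool) : Prop := ¬(p.1 = q.1 ∧ p.2 = !q.2)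

def stp (a b : α) (p : α × Bool) : List (α × Bool) :=
  if p.1 = a then (if p.2 then [(a, true), (b, true)] else [(b, false), (a, false)])
  else [p]

def fstL (a b : α) (p : α × Bool) : α × Bool :=
  if p.1 = a then (if p.2 then (a, true) else (b, false)) else p

def lastL (a b : α) (p : α × Bool) : α × Bool :=
  if p.1 = a then (if p.2 then (b, true) else (a, false)) else p

def HeadOK (a b : α) (q h : α × Bool) : Prop :=
  h = fstL a b q ∨ (q = (b, true) ∧ h = (a, false))

def R (a b : α) : List (α × Bool) → List (α × Bool)
  | [] => []
  | [p] => stp a b p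
  | p :: q :: l =>
    if p = (a, true) ∧ q = (b, false) then (a, true) :: R a b l
    else if p = (b, true) ∧ q = (a, false) then (a, false) :: R a b l
    else stp a b p ++ R a b (q :: l)

def pc (a b : α) : List (α × Bool) → ℕ
  | p :: q :: l =>
    (if (p = (a, true) ∧ q = (b, false)) ∨ (p = (b, true) ∧ q = (a, false)) then 1 else 0)
      + pc a b (q :: l)
  | _ => 0

lemma stp_ne_nil (a b : α) (p : α × Bool) : stp a b p ≠ [] := by
  unfold stp; split <;> [skip; simp] <;> split <;> simp

lemma stp_chain (hab : a ≠ b) (p : α × Bool) : List.Chain' (NC (α := α)) (stp a b p) := by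
  unfold stp; split
  · split <;> simp [NC, hab, hab.symm, List.Chain']
  · simp [List.Chain']

lemma stp_head (a b : α) (p : α × Bool) : (stp a b p).head? = some (fstL a b p) := by
  unfold stp fstL; split <;> [skip; simp] <;> split <;> simp

lemma stp_last (a b : α) (p : α × Bool) : (stp a b p).getLast? = some (lastL a b p) := by
  unfold stp lastL; split <;> [skip; simp] <;> split <;> simp

lemma glue_main (hab : a ≠ b) (p q h : α × Bool) (hpq : NC p q)
    (hnp : ¬((p = (a, true) ∧ q = (b, false)) ∨ (p = (b, true) ∧ q = (a, false))))
    (hh : HeadOK a b q h) : NC (lastL a b p) h := by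
  obtain ⟨x, s⟩ := p; obtain ⟨y, t⟩ := q
  rcases hh with rfl | ⟨hq, rfl⟩ <;>
  · simp only [NC, fstL, lastL, Prod.mk.injEq, not_and, not_or, Prod.ext_iff] at *
    by_cases hx : x = a <;> by_cases hy : y = a <;> by_cases hxb : x = b <;>
      by_cases hyb : y = b <;> cases s <;> cases t <;> simp_all <;>
      first | exact fun hc => hyb hc.symm | exact fun hc => hy hc.symm | skip

lemma glue_pair1 (hab : a ≠ b) (r h : α × Bool) (hqr : NC ((b, false) : α × Bool) r)
    (hh : HeadOK a b r h) : NC ((a, true) : α × Bool) h := by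
  obtain ⟨y, t⟩ := r
  rcases hh with rfl | ⟨hq, rfl⟩ <;>
  · simp only [NC, fstL, Prod.mk.injEq, not_and, Prod.ext_iff] at *
    by_cases hy : y = a <;> by_cases hyb : y = b <;> cases t <;> simp_all <;>
      first | exact fun hc => hyb hc.symm | exact fun hc => hy hc.symm | skip

lemma glue_pair2 (hab : a ≠ b) (r h : α × Bool) (hqr : NC ((a, false) : α × Bool) r)
    (hh : HeadOK a b r h) : NC ((a, false) : α × Bool) h := by
  obtain ⟨y, t⟩ := r
  rcases hh with rfl | ⟨hq, rfl⟩ <;>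
  · simp only [NC, fstL, Prod.mk.injEq, not_and, Prod.ext_iff] at *
    by_cases hy : y = a <;> by_cases hyb : y = b <;> cases t <;> simp_all <;>
      first | exact fun hc => hyb hc.symm | exact fun hc => hy hc.symm | skip

lemma reduce_eq_self {L : List (α × Bool)} (h : List.Chain' NC L) :
    FreeGroup.reduce L = L := by
  induction L with
  | nil => rfl
  | cons x L ih =>
    rw [FreeGroup.reduce.cons, ih h.tail]
    cases L with
    | nil => rfl
    | cons y t =>
      have hxy : NC x y := (List.isChain_cons_cons.mp h).1
      simp only []
      rw [if_neg hxy]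

lemma chain'_reduce (L : List (α × Bool)) : List.Chain' NC (FreeGroup.reduce L) := by
  induction L with
  | nil => simp [List.Chain']
  | cons x L ih =>
    rw [FreeGroup.reduce.cons]
    rcases hred : FreeGroup.reduce L with _ | ⟨hd, tl⟩
    · simp [List.Chain']
    · rw [hred] at ih
      by_cases hc : x.1 = hd.1 ∧ x.2 = !hd.2
      · simpa only [if_pos hc, List.Chain', List.tail_cons] using ih.tail
      · simpa only [if_neg hc, List.Chain'] using List.isChain_cons_cons.mpr ⟨hc, ih⟩

lemma mk_single_false (x : α) :
    FreeGroup.mk [(x, false)] = (FreeGroup.of x)⁻¹ := by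
  rw [show FreeGroup.of x = FreeGroup.mk [(x, true)] from rfl, FreeGroup.inv_mk]
  simp [FreeGroup.invRev]

lemma mk_pair1 (a b : α) :
    FreeGroup.mk [(a, true), (b, true), (b, false)] = FreeGroup.mk [(a, true)] := by
  rw [show [(a, true), (b, true), (b, false)] = [(a, true)] ++ [(b, true)] ++ [(b, false)]
    from rfl, ← FreeGroup.mul_mk, ← FreeGroup.mul_mk, mk_single_false,
    show FreeGroup.mk [(b, true)] = FreeGroup.of b from rfl, mul_inv_cancel_right]

lemma mk_pair2 (a b : α) :
    FreeGroup.mk [(b, true), (b, false), (a, false)] = FreeGroup.mk [(a, false)] := by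
  rw [show [(b, true), (b, false), (a, false)] = [(b, true)] ++ [(b, false)] ++ [(a, false)]
    from rfl, ← FreeGroup.mul_mk, ← FreeGroup.mul_mk, mk_single_false,
    show FreeGroup.mk [(b, true)] = FreeGroup.of b from rfl, mul_inv_cancel, one_mul]

lemma R_spec (hab : a ≠ b) (L : List (α × Bool)) (hL : List.Chain' NC L) :
    FreeGroup.mk (R a b L) = FreeGroup.mk (L.flatMap (stp a b)) ∧
    List.Chain' NC (R a b L) ∧
    (R a b L).length + 2 * pc a b L = L.length + L.countP (fun p => p.1 = a) ∧
    (∀ q l h, L = q :: l → (R a b L).head? = some h → HeadOK a b q h) := by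
  induction L using R.induct (a := a) (b := b) with
  | case1 =>
    refine ⟨rfl, by simp [R, List.Chain'], by simp [R, pc], ?_⟩
    intro q l h hEq; simp at hEq
  | case2 p =>
    refine ⟨by simp [R], stp_chain hab p, ?_, ?_⟩
    · obtain ⟨x, s⟩ := p
      by_cases hx : x = a <;> cases s <;> simp [R, stp, pc, hx]
    · intro q l h hEq hh
      injection hEq with e1 e2; subst e1; subst e2
      rw [show R a b [p] = stp a b p from rfl, stp_head] at hh
      exact Or.inl (Option.some_injective _ hh).symm
  | case3 p q l hcond ih =>
    obtain ⟨rfl, rfl⟩ := hcond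
    have hRl := ih hL.tail.tail
    have hR : R a b ((a, true) :: (b, false) :: l) = (a, true) :: R a b l := by
      rw [R]; simp
    have hhead : ∀ h ∈ (R a b l).head?, NC ((a, true) : α × Bool) h := by
      intro h hh
      cases l with
      | nil => simp [R] at hh
      | cons r l' =>
        have hqr : NC ((b, false) : α × Bool) r := (List.isChain_cons_cons.mp hL.tail).1
        exact glue_pair1 hab r h hqr (hRl.2.2.2 r l' h rfl hh)
    refine ⟨?_, ?_, ?_, ?_⟩
    · have hfm : ((a, true) :: (b, false) :: l).flatMap (stp a b)
          = [(a, true), (b, true), (b, false)] ++ l.flatMap (stp a b) := by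
        simp [stp, hab, hab.symm]
      rw [hR, hfm]
      calc FreeGroup.mk ((a, true) :: R a b l)
          = FreeGroup.mk ([(a, true)] ++ R a b l) := rfl
        _ = FreeGroup.mk [(a, true)] * FreeGroup.mk (R a b l) := (FreeGroup.mul_mk).symm
        _ = FreeGroup.mk [(a, true)] * FreeGroup.mk (l.flatMap (stp a b)) := by rw [hRl.1]
        _ = FreeGroup.mk [(a, true), (b, true), (b, false)]
              * FreeGroup.mk (l.flatMap (stp a b)) := by rw [mk_pair1]
        _ = FreeGroup.mk ([(a, true), (b, true), (b, false)] ++ l.flatMap (stp a b)) :=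
            FreeGroup.mul_mk
    · rw [hR]; exact List.isChain_cons.mpr ⟨hhead, hRl.2.1⟩
    · have hpc : pc a b ((a, true) :: (b, false) :: l) = 1 + pc a b ((b, false) :: l) := by
        simp [pc]
      have hpc2 : pc a b ((b, false) :: l) = pc a b l := by
        cases l with
        | nil => simp [pc]
        | cons r l' => simp [pc, Prod.ext_iff, hab]
      have hcnt : ((a, true) :: (b, false) :: l).countP (fun p => p.1 = a)
          = l.countP (fun p => p.1 = a) + 1 := by
        simp [List.countP_cons, hab.symm]
      rw [hR, hpc, hpc2, hcnt]
      have := hRl.2.2.1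
      simp only [List.length_cons]
      omega
    · intro q' l' h hEq hh
      injection hEq with e1 e2; subst e1; subst e2
      rw [hR] at hh
      simp only [List.head?_cons, Option.some.injEq] at hh
      subst hh
      exact Or.inl (by simp [fstL])
  | case4 p q l hcond1 hcond2 ih =>
    obtain ⟨rfl, rfl⟩ := hcond2
    have hRl := ih hL.tail.tail
    have hR : R a b ((b, true) :: (a, false) :: l) = (a, false) :: R a b l := by
      rw [R]; simp [Prod.ext_iff, hab]
    have hhead : ∀ h ∈ (R a b l).head?, NC ((a, false) : α × Bool) h := by
      intro h hh
      cases l with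
      | nil => simp [R] at hh
      | cons r l' =>
        have hqr : NC ((a, false) : α × Bool) r := (List.isChain_cons_cons.mp hL.tail).1
        exact glue_pair2 hab r h hqr (hRl.2.2.2 r l' h rfl hh)
    refine ⟨?_, ?_, ?_, ?_⟩
    · have hfm : ((b, true) :: (a, false) :: l).flatMap (stp a b)
          = [(b, true), (b, false), (a, false)] ++ l.flatMap (stp a b) := by
        simp [stp, hab, hab.symm]
      rw [hR, hfm]
      calc FreeGroup.mk ((a, false) :: R a b l)
          = FreeGroup.mk ([(a, false)] ++ R a b l) := rfl
        _ = FreeGroup.mk [(a, false)] * FreeGroup.mk (R a b l) := (FreeGroup.mul_mk).symm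
        _ = FreeGroup.mk [(a, false)] * FreeGroup.mk (l.flatMap (stp a b)) := by rw [hRl.1]
        _ = FreeGroup.mk [(b, true), (b, false), (a, false)]
              * FreeGroup.mk (l.flatMap (stp a b)) := by rw [mk_pair2]
        _ = FreeGroup.mk ([(b, true), (b, false), (a, false)] ++ l.flatMap (stp a b)) :=
            FreeGroup.mul_mk
    · rw [hR]; exact List.isChain_cons.mpr ⟨hhead, hRl.2.1⟩
    · have hpc : pc a b ((b, true) :: (a, false) :: l) = 1 + pc a b ((a, false) :: l) := by
        simp [pc]
      have hpc2 : pc a b ((a, false) :: l) = pc a b l := by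
        cases l with
        | nil => simp [pc]
        | cons r l' => simp [pc, Prod.ext_iff, hab]
      have hcnt : ((b, true) :: (a, false) :: l).countP (fun p => p.1 = a)
          = l.countP (fun p => p.1 = a) + 1 := by
        simp [List.countP_cons, hab.symm]
      rw [hR, hpc, hpc2, hcnt]
      have := hRl.2.2.1
      simp only [List.length_cons]
      omega
    · intro q' l' h hEq hh
      injection hEq with e1 e2; subst e1; subst e2
      rw [hR] at hh
      simp only [List.head?_cons, Option.some.injEq] at hh
      subst hh
      exact Or.inr ⟨rfl, rfl⟩
  | case5 p q l hcond1 hcond2 ih =>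
    have hRl := ih hL.tail
    have hR : R a b (p :: q :: l) = stp a b p ++ R a b (q :: l) := by
      rw [R]; rw [if_neg hcond1, if_neg hcond2]
    have hpq : NC p q := (List.isChain_cons_cons.mp hL).1
    have hnp : ¬((p = (a, true) ∧ q = (b, false)) ∨ (p = (b, true) ∧ q = (a, false))) :=
      not_or.mpr ⟨hcond1, hcond2⟩
    refine ⟨?_, ?_, ?_, ?_⟩
    · rw [hR, ← FreeGroup.mul_mk, hRl.1, FreeGroup.mul_mk]
      simp [List.flatMap_cons]
    · rw [hR]
      refine List.isChain_append.mpr ⟨stp_chain hab p, hRl.2.1, ?_⟩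
      intro x hx y hy
      rw [stp_last, Option.mem_def, Option.some.injEq] at hx
      subst hx
      exact glue_main hab p q y hpq hnp (hRl.2.2.2 q l y rfl (Option.mem_def.mp hy))
    · rw [hR]
      have hpc : pc a b (p :: q :: l) = pc a b (q :: l) := by
        simp [pc, hnp]
      have hlen : (stp a b p).length = 1 + (if p.1 = a then 1 else 0) := by
        unfold stp; split <;> [skip; simp] <;> split <;> simp
      have hcnt : (p :: q :: l).countP (fun p => p.1 = a)
          = (q :: l).countP (fun p => p.1 = a) + (if p.1 = a then 1 else 0) := by
        simp [List.countP_cons]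
      rw [List.length_append, hpc, hcnt, hlen]
      have := hRl.2.2.1
      simp only [List.length_cons] at *
      omega
    · intro q' l' h hEq hh
      injection hEq with e1 e2; subst e1; subst e2
      rw [hR] at hh
      rcases hs : stp a b p with _ | ⟨s0, srest⟩
      · exact absurd hs (stp_ne_nil a b p)
      · have hsh := stp_head a b p
        rw [hs] at hsh hh
        simp only [List.head?_cons, Option.some.injEq] at hsh
        simp only [List.cons_append, List.head?_cons, Option.some.injEq] at hh
        exact Or.inl (hh.symm.trans hsh)

lemma pc_cons_le (a b : α) (p : α × Bool) (L : List (α × Bool)) :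
    pc a b (p :: L) ≤ pc a b L + 1 := by
  cases L with
  | nil => simp [pc]
  | cons q l => simp only [pc]; split <;> omega

lemma pc_append_le (a b : α) (L₁ L₂ : List (α × Bool)) :
    pc a b (L₁ ++ L₂) ≤ pc a b L₁ + pc a b L₂ + 1 := by
  induction L₁ with
  | nil => simp [pc]
  | cons p L ih =>
    cases L with
    | nil =>
      simpa [pc] using pc_cons_le a b p L₂
    | cons q l =>
      rw [List.cons_append] at ih
      simp only [List.cons_append, pc, List.append_eq]
      split <;> omega

end NBC

open NBC in
/-- bounded cancellation for a Nielsen move. For the automorphism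
`φ` of `F_n` with `φ(x₁) = x₁x₂`, `φ(xᵢ) = xᵢ` (`i ≠ 1`): if there is no cancellation
in the product `u·v`, then `|φ(uv)| ≥ |φ(u)| + |φ(v)| - 2`. -/
theorem nielsen_bounded_cancellation (n : ℕ) (hn : 2 ≤ n)
    (φ : FreeGroup (Fin n) ≃* FreeGroup (Fin n))
    (h1 : φ (FreeGroup.of (⟨0, by omega⟩ : Fin n)) =
      FreeGroup.of (⟨0, by omega⟩ : Fin n) * FreeGroup.of (⟨1, by omega⟩ : Fin n))
    (h2 : ∀ i : Fin n, i.val ≠ 0 → φ (FreeGroup.of i) = FreeGroup.of i)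
    (u v : FreeGroup (Fin n))
    (huv : (u * v).toWord.length = u.toWord.length + v.toWord.length) :
    (φ u).toWord.length + (φ v).toWord.length ≤ (φ (u * v)).toWord.length + 2 := by
  set a : Fin n := ⟨0, by omega⟩ with ha
  set b : Fin n := ⟨1, by omega⟩ with hb
  have hab : a ≠ b := by
    intro h; rw [Fin.ext_iff] at h; simp [ha, hb] at h
  -- φ on mk of a word
  have key : ∀ L : List (Fin n × Bool), φ (FreeGroup.mk L) = FreeGroup.mk (L.flatMap (stp a b)) := by
    intro L
    induction L with
    | nil =>
      rw [show (([] : List (Fin n × Bool)).flatMap (stp a b)) = [] from rfl,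
        ← FreeGroup.one_eq_mk, map_one]
    | cons p L ih =>
      rw [show (p :: L) = [p] ++ L from rfl, ← FreeGroup.mul_mk, map_mul, ih]
      have hsingle : φ (FreeGroup.mk [p]) = FreeGroup.mk (stp a b p) := by
        obtain ⟨x, s⟩ := p
        by_cases hx : x = a
        · subst hx
          cases s
          · rw [mk_single_false, map_inv, h1]
            rw [show stp a b (a, false) = [(b, false)] ++ [(a, false)] by simp [stp],
              ← FreeGroup.mul_mk, mk_single_false, mk_single_false, mul_inv_rev]
          · rw [show FreeGroup.mk [(a, true)] = FreeGroup.of a from rfl, h1,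
              show stp a b (a, true) = [(a, true)] ++ [(b, true)] by simp [stp],
              ← FreeGroup.mul_mk]
            rfl
        · have hx0 : x.val ≠ 0 := fun hv => hx (Fin.ext hv)
          have hst : stp a b (x, s) = [(x, s)] := by simp [stp, hx]
          cases s
          · rw [mk_single_false, map_inv, h2 x hx0, hst, mk_single_false]
          · rw [show FreeGroup.mk [(x, true)] = FreeGroup.of x from rfl, h2 x hx0, hst]
            rfl
      rw [hsingle, FreeGroup.mul_mk,
        show ([p] ++ L : List (Fin n × Bool)) = p :: L from rfl, List.flatMap_cons]
  -- toWord of the product is the concatenation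
  have hcat : (u * v).toWord = u.toWord ++ v.toWord := by
    have hmk : u * v = FreeGroup.mk (u.toWord ++ v.toWord) := by
      rw [← FreeGroup.mul_mk, FreeGroup.mk_toWord, FreeGroup.mk_toWord]
    rw [hmk, FreeGroup.toWord_mk]
    have hsub : List.Sublist (FreeGroup.reduce (u.toWord ++ v.toWord)) (u.toWord ++ v.toWord) :=
      FreeGroup.Red.sublist FreeGroup.reduce.red
    apply hsub.eq_of_length
    have : (u * v).toWord.length = (FreeGroup.reduce (u.toWord ++ v.toWord)).length := by
      rw [hmk, FreeGroup.toWord_mk]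
    rw [← this, huv, List.length_append]
  -- chain' facts
  have cu : List.Chain' NC u.toWord := by
    rw [← FreeGroup.reduce_toWord]; exact chain'_reduce _
  have cv : List.Chain' NC v.toWord := by
    rw [← FreeGroup.reduce_toWord]; exact chain'_reduce _
  have cuv : List.Chain' NC (u.toWord ++ v.toWord) := by
    rw [← hcat, ← FreeGroup.reduce_toWord]; exact chain'_reduce _
  -- length formula for any reduced word
  have main : ∀ L : List (Fin n × Bool), List.Chain' NC L →
      (φ (FreeGroup.mk L)).toWord.length + 2 * pc a b L
        = L.length + L.countP (fun p => p.1 = a) := by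
    intro L hL
    obtain ⟨hmk, hch, hlen, _⟩ := R_spec hab L hL
    rw [key L, ← hmk, FreeGroup.toWord_mk, reduce_eq_self hch]
    exact hlen
  have e1 := main u.toWord cu
  have e2 := main v.toWord cv
  have e3 := main (u.toWord ++ v.toWord) cuv
  rw [FreeGroup.mk_toWord] at e1 e2
  rw [show FreeGroup.mk (u.toWord ++ v.toWord) = u * v by
    rw [← FreeGroup.mul_mk, FreeGroup.mk_toWord, FreeGroup.mk_toWord]] at e3
  rw [List.countP_append, List.length_append] at e3
  have e4 := pc_append_le a b u.toWord v.toWord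
  omega
end
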